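/- Fix λ > 0 and c ∈ (0, 2) with c ≠ 1, and set k = c/λ. For K > 2/λ define m(K) = ⌈log(Kλ − 1)/(−log|1 − c|)⌉ and α(K) = (1 + m(K))/(K + k·m(K)). Then the rescaled cost satisfies lim_{K → ∞} α(K) · K / log(Kλ) = 1/(−log|1 − c|); in particular α(K) → 0 as K → ∞, so the cost reduction factor α(K)/α₀ relative to the classical cost α₀ = λ/2 tends to 0. -/

import Mathlib

/-- Fix `λ > 0` and `c ∈ (0,2)`, `c ≠ 1`, and set `k = c/λ`. For
`K > 2/λ` define `m(K) = ⌈log(Kλ − 1)/(−log|1 − c|)⌉` and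
`α(K) = (1 + m(K))/(K + k·m(K))`. Then `α(K)·K/log(Kλ) → 1/(−log|1 − c|)` as
`K → ∞`; in particular `α(K) → 0`, so the cost reduction factor `α(K)/α₀` with
`α₀ = λ/2` tends to `0`. -/
theorem stmt6 (lam c k : ℝ) (hlam : 0 < lam) (hc0 : 0 < c) (hc2 : c < 2)
    (hc1 : c ≠ 1) (hk : k = c / lam)
    (m : ℝ → ℕ) (α : ℝ → ℝ)
    (hm : ∀ K, 2 / lam < K →
      m K = ⌈Real.log (K * lam - 1) / (-Real.log |1 - c|)⌉₊)
    (hα : ∀ K, 2 / lam < K → α K = (1 + (m K : ℝ)) / (K + k * m K)) :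
    Filter.Tendsto (fun K => α K * K / Real.log (K * lam)) Filter.atTop
        (nhds (1 / (-Real.log |1 - c|))) ∧
    Filter.Tendsto α Filter.atTop (nhds 0) ∧
    Filter.Tendsto (fun K => α K / (lam / 2)) Filter.atTop (nhds 0) := by
  have h1c0 : 0 < |1 - c| := abs_pos.2 (sub_ne_zero.2 (fun h => hc1 h.symm))
  have h1c : |1 - c| < 1 := abs_lt.2 ⟨by linarith, by linarith⟩
  have hL : 0 < -Real.log |1 - c| := by
    have := Real.log_neg h1c0 h1c; linarith
  set L := -Real.log |1 - c| with hLdef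
  have hkpos : 0 < k := by rw [hk]; positivity
  have hmul : Filter.Tendsto (fun K : ℝ => K * lam) Filter.atTop Filter.atTop :=
    Filter.Tendsto.atTop_mul_const hlam Filter.tendsto_id
  have hlogtop : Filter.Tendsto (fun K : ℝ => Real.log (K * lam)) Filter.atTop Filter.atTop :=
    Real.tendsto_log_atTop.comp hmul
  have hinvlog : Filter.Tendsto (fun K : ℝ => 1 / Real.log (K * lam)) Filter.atTop (nhds 0) :=
    Filter.Tendsto.div_atTop tendsto_const_nhds hlogtop
  -- ratio of logs tends to 1
  have hrat : Filter.Tendsto (fun K : ℝ => Real.log (K * lam - 1) / Real.log (K * lam))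
      Filter.atTop (nhds 1) := by
    have h1 : Filter.Tendsto (fun K : ℝ => Real.log (1 - 1 / (K * lam))) Filter.atTop (nhds 0) := by
      have h0 : Filter.Tendsto (fun K : ℝ => 1 - 1 / (K * lam)) Filter.atTop (nhds 1) := by
        have := Filter.Tendsto.div_atTop (f := fun _ : ℝ => (1:ℝ)) tendsto_const_nhds hmul
        simpa using tendsto_const_nhds.sub this
      have := ((Real.continuousAt_log (by norm_num)).tendsto).comp h0
      simpa [Function.comp_def] using this
    have h2 : Filter.Tendsto
        (fun K : ℝ => 1 + Real.log (1 - 1 / (K * lam)) * (1 / Real.log (K * lam)))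
        Filter.atTop (nhds 1) := by
      simpa using tendsto_const_nhds.add (h1.mul hinvlog)
    apply h2.congr'
    filter_upwards [Filter.eventually_gt_atTop (2 / lam)] with K hK
    have hK0 : 0 < K := lt_trans (by positivity) hK
    have hKl : 2 < K * lam := (div_lt_iff₀ hlam).1 hK
    have hlogpos : 0 < Real.log (K * lam) := Real.log_pos (by linarith)
    have hx : (0:ℝ) < 1 - 1 / (K * lam) := by
      have : 1 / (K * lam) < 1 / 2 := by
        apply one_div_lt_one_div_of_lt <;> linarith
      linarith
    have e1 : K * lam - 1 = (K * lam) * (1 - 1 / (K * lam)) := by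
      field_simp
    rw [e1, Real.log_mul (by positivity) hx.ne', add_div, div_self hlogpos.ne']
    ring
  -- (1 + m K)/log(K*lam) → 1/L
  have hB : Filter.Tendsto (fun K : ℝ => (1 + (m K : ℝ)) / Real.log (K * lam))
      Filter.atTop (nhds (1 / L)) := by
    have hlow : Filter.Tendsto
        (fun K : ℝ => 1 / Real.log (K * lam) +
          (Real.log (K * lam - 1) / Real.log (K * lam)) * (1 / L))
        Filter.atTop (nhds (1 / L)) := by
      simpa using hinvlog.add (hrat.mul (tendsto_const_nhds (x := 1 / L)))
    have hup : Filter.Tendsto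
        (fun K : ℝ => 2 * (1 / Real.log (K * lam)) +
          (Real.log (K * lam - 1) / Real.log (K * lam)) * (1 / L))
        Filter.atTop (nhds (1 / L)) := by
      have := (tendsto_const_nhds (x := (2:ℝ))).mul hinvlog
      simpa using this.add (hrat.mul (tendsto_const_nhds (x := 1 / L)))
    apply tendsto_of_tendsto_of_tendsto_of_le_of_le' hlow hup
    · filter_upwards [Filter.eventually_gt_atTop (2 / lam)] with K hK
      have hK0 : 0 < K := lt_trans (by positivity) hK
      have hKl : 2 < K * lam := (div_lt_iff₀ hlam).1 hK
      have hlogpos : 0 < Real.log (K * lam) := Real.log_pos (by linarith)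
      have hx : Real.log (K * lam - 1) / L ≤ (m K : ℝ) := by
        rw [hm K hK]; exact Nat.le_ceil _
      have hLne : L ≠ 0 := hL.ne'
      have e : 1 / Real.log (K * lam) +
          (Real.log (K * lam - 1) / Real.log (K * lam)) * (1 / L)
          = (1 + Real.log (K * lam - 1) / L) / Real.log (K * lam) := by
        field_simp
      rw [e]
      exact (div_le_div_iff_of_pos_right hlogpos).2 (by linarith)
    · filter_upwards [Filter.eventually_gt_atTop (2 / lam)] with K hK
      have hK0 : 0 < K := lt_trans (by positivity) hK
      have hKl : 2 < K * lam := (div_lt_iff₀ hlam).1 hK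
      have hlogpos : 0 < Real.log (K * lam) := Real.log_pos (by linarith)
      have hlog1pos : 0 < Real.log (K * lam - 1) := Real.log_pos (by linarith)
      have hx : (m K : ℝ) < Real.log (K * lam - 1) / L + 1 := by
        rw [hm K hK]
        exact Nat.ceil_lt_add_one (by positivity)
      have hLne : L ≠ 0 := hL.ne'
      have e : 2 * (1 / Real.log (K * lam)) +
          (Real.log (K * lam - 1) / Real.log (K * lam)) * (1 / L)
          = (2 + Real.log (K * lam - 1) / L) / Real.log (K * lam) := by
        field_simp
      rw [e]
      exact (div_le_div_iff_of_pos_right hlogpos).2 (by linarith)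
  -- log(K*lam)/K → 0
  have hlogdivK : Filter.Tendsto (fun K : ℝ => Real.log (K * lam) / K) Filter.atTop (nhds 0) := by
    have hlogK : Filter.Tendsto (fun K : ℝ => Real.log K / K) Filter.atTop (nhds 0) :=
      Real.isLittleO_log_id_atTop.tendsto_div_nhds_zero
    have hconst : Filter.Tendsto (fun K : ℝ => Real.log lam / K) Filter.atTop (nhds 0) :=
      Filter.Tendsto.div_atTop tendsto_const_nhds Filter.tendsto_id
    have := hlogK.add hconst
    rw [add_zero] at this
    apply this.congr'
    filter_upwards [Filter.eventually_gt_atTop (0:ℝ)] with K hK0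
    rw [Real.log_mul hK0.ne' hlam.ne', add_div]
  -- m K / K → 0
  have hmdivK : Filter.Tendsto (fun K : ℝ => (m K : ℝ) / K) Filter.atTop (nhds 0) := by
    have h1m : Filter.Tendsto (fun K : ℝ => (1 + (m K : ℝ)) / K) Filter.atTop (nhds 0) := by
      have := hB.mul hlogdivK
      rw [mul_zero] at this
      apply this.congr'
      filter_upwards [Filter.eventually_gt_atTop (2 / lam)] with K hK
      have hK0 : 0 < K := lt_trans (by positivity) hK
      have hKl : 2 < K * lam := (div_lt_iff₀ hlam).1 hK
      have hlogpos : 0 < Real.log (K * lam) := Real.log_pos (by linarith)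
      field_simp
    have hinvK : Filter.Tendsto (fun K : ℝ => 1 / K) Filter.atTop (nhds 0) :=
      Filter.Tendsto.div_atTop tendsto_const_nhds Filter.tendsto_id
    have := h1m.sub hinvK
    rw [sub_zero] at this
    apply this.congr'
    filter_upwards [Filter.eventually_gt_atTop (0:ℝ)] with K hK0
    field_simp
    ring
  -- K/(K + k m K) → 1
  have hfrac : Filter.Tendsto (fun K : ℝ => K / (K + k * (m K : ℝ))) Filter.atTop (nhds 1) := by
    have h0 : Filter.Tendsto (fun K : ℝ => (1 + k * ((m K : ℝ) / K))⁻¹) Filter.atTop (nhds 1) := by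
      have := (tendsto_const_nhds (x := (1:ℝ))).add ((tendsto_const_nhds (x := k)).mul hmdivK)
      rw [mul_zero, add_zero] at this
      simpa using this.inv₀ one_ne_zero
    apply h0.congr'
    filter_upwards [Filter.eventually_gt_atTop (0:ℝ)] with K hK0
    have hden : 0 < K + k * (m K : ℝ) := by positivity
    field_simp
  -- first target
  have targ1 : Filter.Tendsto (fun K => α K * K / Real.log (K * lam)) Filter.atTop
      (nhds (1 / L)) := by
    have := hB.mul hfrac
    rw [mul_one] at this
    apply this.congr'
    filter_upwards [Filter.eventually_gt_atTop (2 / lam)] with K hK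
    have hK0 : 0 < K := lt_trans (by positivity) hK
    have hKl : 2 < K * lam := (div_lt_iff₀ hlam).1 hK
    have hlogpos : 0 < Real.log (K * lam) := Real.log_pos (by linarith)
    have hden : 0 < K + k * (m K : ℝ) := by positivity
    rw [hα K hK]
    field_simp
  -- second target
  have targ2 : Filter.Tendsto α Filter.atTop (nhds 0) := by
    have := targ1.mul hlogdivK
    rw [mul_zero] at this
    apply this.congr'
    filter_upwards [Filter.eventually_gt_atTop (2 / lam)] with K hK
    have hK0 : 0 < K := lt_trans (by positivity) hK
    have hKl : 2 < K * lam := (div_lt_iff₀ hlam).1 hK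
    have hlogpos : 0 < Real.log (K * lam) := Real.log_pos (by linarith)
    field_simp
  refine ⟨targ1, targ2, ?_⟩
  simpa using targ2.div_const (lam / 2)
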